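/- arXiv:2209.03730 — 6 statements merged into one kernel-verified Lean document; each statement's English description precedes it below -/
import Mathlib

section
/- Let v be a binary vector of length n ≥ 1 and let N be a positive integer. Then 2^n divides 3^{m(v)}·N + P(v) if and only if the parity vector of length n of N equals v; and in that case T^n(N) = (3^{m(v)}·N + P(v)) / 2^n. (Paper's Theorem 4.5.) -/
/-- The Collatz map `T`. -/
def collatzT (N : ℕ) : ℕ := if N % 2 = 0 then N / 2 else (3 * N + 1) / 2

/-- The parity vector of length `n` of `N`: entry `k` is `true` iff `T^[k] N` is odd. -/
def parityVec (N n : ℕ) : List Bool :=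
  (List.range n).map (fun k => decide ((collatzT^[k] N) % 2 = 1))

/-- `m(v)`: the number of ones of a binary vector. -/
def mOnes (v : List Bool) : ℕ := v.count true

/-- `P(v)`: the characteristic number of a binary vector,
`P(v) = Σ_{k=1}^{m} 3^(m-k) * 2^(j_k - 1)` where `j_1 < … < j_m` are the positions of ones. -/
def Pchar : List Bool → ℕ
  | [] => 0
  | e :: rest => (if e then 3 ^ mOnes rest else 0) + 2 * Pchar rest

lemma collatzT_pos {N : ℕ} (h : 0 < N) : 0 < collatzT N := by
  unfold collatzT; split <;> omega

lemma parityVec_succ (N n : ℕ) :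
    parityVec N (n + 1) = decide (N % 2 = 1) :: parityVec (collatzT N) n := by
  unfold parityVec
  rw [List.range_succ_eq_map, List.map_cons, List.map_map]
  simp [Function.comp, Function.iterate_succ_apply]
  exact ⟨rfl, fun _ _ => rfl⟩

lemma match_true (rest : List Bool) (N : ℕ) (h : N % 2 = 1) :
    3 ^ mOnes (true :: rest) * N + Pchar (true :: rest) =
      2 * (3 ^ mOnes rest * collatzT N + Pchar rest) := by
  have ht : 2 * collatzT N = 3 * N + 1 := by
    unfold collatzT; rw [if_neg (by omega)]; omega
  have hm : mOnes (true :: rest) = mOnes rest + 1 := by simp [mOnes]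
  have hp : Pchar (true :: rest) = 3 ^ mOnes rest + 2 * Pchar rest := by simp [Pchar]
  rw [hm, hp, pow_succ]
  calc 3 ^ mOnes rest * 3 * N + (3 ^ mOnes rest + 2 * Pchar rest)
      = 3 ^ mOnes rest * (3 * N + 1) + 2 * Pchar rest := by ring
    _ = 3 ^ mOnes rest * (2 * collatzT N) + 2 * Pchar rest := by rw [ht]
    _ = 2 * (3 ^ mOnes rest * collatzT N + Pchar rest) := by ring

lemma match_false (rest : List Bool) (N : ℕ) (h : N % 2 = 0) :
    3 ^ mOnes (false :: rest) * N + Pchar (false :: rest) =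
      2 * (3 ^ mOnes rest * collatzT N + Pchar rest) := by
  have ht : 2 * collatzT N = N := by
    unfold collatzT; rw [if_pos h]; omega
  have hm : mOnes (false :: rest) = mOnes rest := by simp [mOnes]
  have hp : Pchar (false :: rest) = 2 * Pchar rest := by simp [Pchar]
  rw [hm, hp]
  calc 3 ^ mOnes rest * N + 2 * Pchar rest
      = 3 ^ mOnes rest * (2 * collatzT N) + 2 * Pchar rest := by rw [ht]
    _ = 2 * (3 ^ mOnes rest * collatzT N + Pchar rest) := by ring

lemma three_pow_mod (m : ℕ) : 3 ^ m % 2 = 1 := by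
  rw [Nat.pow_mod]; norm_num

lemma mismatch_odd (e : Bool) (rest : List Bool) (N : ℕ)
    (h : decide (N % 2 = 1) ≠ e) :
    (3 ^ mOnes (e :: rest) * N + Pchar (e :: rest)) % 2 = 1 := by
  cases e with
  | true =>
      have hN : N % 2 = 0 := by
        by_contra hc; exact h (by simp; omega)
      have hm : mOnes (true :: rest) = mOnes rest + 1 := by simp [mOnes]
      have hp : Pchar (true :: rest) = 3 ^ mOnes rest + 2 * Pchar rest := by simp [Pchar]
      rw [hm, hp]
      have hA : 3 ^ (mOnes rest + 1) * N % 2 = 0 := by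
        rw [Nat.mul_mod, hN]; simp
      have hB := three_pow_mod (mOnes rest)
      omega
  | false =>
      have hN : N % 2 = 1 := by
        by_contra hc; simp at h; omega
      have hm : mOnes (false :: rest) = mOnes rest := by simp [mOnes]
      have hp : Pchar (false :: rest) = 2 * Pchar rest := by simp [Pchar]
      rw [hm, hp]
      have hA : 3 ^ mOnes rest * N % 2 = 1 := by
        rw [Nat.mul_mod, hN, three_pow_mod]
      omega

lemma main_aux : ∀ (v : List Bool) (N : ℕ), 0 < N →
    ((2 ^ v.length ∣ 3 ^ mOnes v * N + Pchar v) ↔ parityVec N v.length = v) ∧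
    (parityVec N v.length = v →
      collatzT^[v.length] N = (3 ^ mOnes v * N + Pchar v) / 2 ^ v.length) := by
  intro v
  induction v with
  | nil =>
      intro N hN
      simp [parityVec, mOnes, Pchar]
  | cons e rest ih =>
      intro N hN
      have hps := parityVec_succ N rest.length
      rw [List.length_cons, hps]
      by_cases hmatch : decide (N % 2 = 1) = e
      · -- parity matches
        have key : 3 ^ mOnes (e :: rest) * N + Pchar (e :: rest) =
            2 * (3 ^ mOnes rest * collatzT N + Pchar rest) := by
          cases e with
          | true => exact match_true rest N (by simpa using hmatch)
          | false =>
              apply match_false rest N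
              have : ¬ (N % 2 = 1) := by simpa using hmatch
              omega
        obtain ⟨ih1, ih2⟩ := ih (collatzT N) (collatzT_pos hN)
        constructor
        · rw [key, pow_succ, mul_comm (2 ^ rest.length) 2,
            mul_dvd_mul_iff_left (two_ne_zero)]
          rw [ih1]
          constructor
          · intro hr; rw [hmatch, hr]
          · intro hr
            have := List.cons.injEq (decide (N % 2 = 1)) (parityVec (collatzT N) rest.length) e rest ▸ hr
            exact (List.cons.inj hr).2
        · intro hr
          have h2 := (List.cons.inj hr).2
          rw [Function.iterate_succ_apply, ih2 h2, key, pow_succ,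
            mul_comm (2 ^ rest.length) 2, Nat.mul_div_mul_left _ _ (by norm_num)]
      · -- parity mismatches: both sides false
        have hodd := mismatch_odd e rest N hmatch
        constructor
        · constructor
          · intro hdvd
            exfalso
            have h2 : (2 : ℕ) ∣ 3 ^ mOnes (e :: rest) * N + Pchar (e :: rest) :=
              dvd_trans (dvd_pow_self 2 (Nat.succ_ne_zero rest.length)) hdvd
            omega
          · intro hr
            exact absurd (List.cons.inj hr).1 hmatch
        · intro hr
          exact absurd (List.cons.inj hr).1 hmatch

/-- Paper's Theorem 4.5: `2^n ∣ 3^(m v) * N + P v` iff the parity vector of length n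
of N equals v, and in that case `T^[n] N = (3^(m v) * N + P v) / 2^n`. -/
theorem stmt_1 (n : ℕ) (hn : 1 ≤ n) (v : List Bool) (hv : v.length = n)
    (N : ℕ) (hN : 0 < N) :
    ((2 ^ n ∣ 3 ^ mOnes v * N + Pchar v) ↔ parityVec N n = v) ∧
    (parityVec N n = v →
      collatzT^[n] N = (3 ^ mOnes v * N + Pchar v) / 2 ^ n) := by
  subst hv
  exact main_aux v N hN
end

section
/- Let n ≥ m ≥ 1 be integers. For every binary vector v of length n with m(v) = m, one has P(v) ≤ 2^{n−m}·(3^m − 2^m); moreover equality holds for the vector whose entries are 0 in positions 1,…,n−m and 1 in positions n−m+1,…,n. (Paper's Theorem 4.3.) -/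
lemma mOnes_cons (e : Bool) (v : List Bool) :
    mOnes (e :: v) = mOnes v + (if e then 1 else 0) := by
  cases e <;> simp [mOnes, List.count_cons]

lemma mOnes_le_length (v : List Bool) : mOnes v ≤ v.length :=
  List.count_le_length

lemma Pchar_bound (v : List Bool) :
    Pchar v ≤ 2 ^ (v.length - mOnes v) * (3 ^ mOnes v - 2 ^ mOnes v) := by
  induction v with
  | nil => simp [Pchar, mOnes]
  | cons e v ih =>
    have hml : mOnes v ≤ v.length := mOnes_le_length v
    set m := mOnes v with hm
    set L := v.length with hL
    have h23 : 2 ^ m ≤ 3 ^ m := Nat.pow_le_pow_left (by norm_num) m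
    cases e
    · have : mOnes (false :: v) = m := by simp [mOnes_cons, hm]
      rw [this]
      have hlen : (false :: v).length - m = (L - m) + 1 := by
        simp [hL]; omega
      have hP : Pchar (false :: v) = 2 * Pchar v := by simp [Pchar]
      rw [hP, hlen, pow_succ]
      calc 2 * Pchar v ≤ 2 * (2 ^ (L - m) * (3 ^ m - 2 ^ m)) := by omega
        _ = 2 ^ (L - m) * 2 * (3 ^ m - 2 ^ m) := by ring
    · have hmo : mOnes (true :: v) = m + 1 := by simp [mOnes_cons, hm]
      rw [hmo]
      have hlen : (true :: v).length - (m + 1) = L - m := by simp [hL]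
      have hP : Pchar (true :: v) = 3 ^ m + 2 * Pchar v := by simp [Pchar, hm]
      rw [hP, hlen]
      have key : 3 ^ (m + 1) - 2 ^ (m + 1) = 3 ^ m + 2 * (3 ^ m - 2 ^ m) := by
        rw [pow_succ, pow_succ]; omega
      rw [key, Nat.mul_add]
      have h1 : 3 ^ m ≤ 2 ^ (L - m) * 3 ^ m :=
        Nat.le_mul_of_pos_left _ (Nat.pow_pos (by norm_num))
      have h2 : 2 * Pchar v ≤ 2 ^ (L - m) * (2 * (3 ^ m - 2 ^ m)) := by
        calc 2 * Pchar v ≤ 2 * (2 ^ (L - m) * (3 ^ m - 2 ^ m)) := by omega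
          _ = 2 ^ (L - m) * (2 * (3 ^ m - 2 ^ m)) := by ring
      omega

lemma Pchar_rep_true (m : ℕ) :
    Pchar (List.replicate m true) = 3 ^ m - 2 ^ m ∧
    mOnes (List.replicate m true) = m := by
  induction m with
  | zero => simp [Pchar, mOnes]
  | succ k ih =>
    obtain ⟨h1, h2⟩ := ih
    have h23 : 2 ^ k ≤ 3 ^ k := Nat.pow_le_pow_left (by norm_num) k
    constructor
    · rw [List.replicate_succ, Pchar, h1, h2, if_pos rfl, pow_succ, pow_succ]
      omega
    · rw [List.replicate_succ, mOnes_cons, h2]; simp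

lemma Pchar_rep_false (k : ℕ) (w : List Bool) :
    Pchar (List.replicate k false ++ w) = 2 ^ k * Pchar w := by
  induction k with
  | zero => simp
  | succ j ih =>
    rw [List.replicate_succ, List.cons_append, Pchar, ih]
    simp [pow_succ]; ring

/-- Paper's Theorem 4.3: for v of length n with m(v) = m (n ≥ m ≥ 1),
`P v ≤ 2^(n-m) * (3^m - 2^m)`, with equality for the vector
`(0,…,0,1,…,1)` (n-m zeros then m ones). -/
theorem stmt_5 (n m : ℕ) (hm : 1 ≤ m) (hmn : m ≤ n) :
    (∀ v : List Bool, v.length = n → mOnes v = m →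
      Pchar v ≤ 2 ^ (n - m) * (3 ^ m - 2 ^ m)) ∧
    Pchar (List.replicate (n - m) false ++ List.replicate m true) =
      2 ^ (n - m) * (3 ^ m - 2 ^ m) := by
  constructor
  · intro v hlen hones
    have := Pchar_bound v
    rwa [hlen, hones] at this
  · rw [Pchar_rep_false, (Pchar_rep_true m).1]
end

section
/- Let v₁ and v₂ be binary vectors of lengths n₁ and n₂ respectively, and let v = v₁ ++ v₂ be their concatenation, a binary vector of length n₁ + n₂. Then P(v) = 3^{m(v₂)}·P(v₁) + 2^{n₁}·P(v₂). (Paper's Proposition 4.1.) -/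
lemma mOnes_append (a b : List Bool) : mOnes (a ++ b) = mOnes a + mOnes b := by
  simp [mOnes, List.count_append]

/-- Paper's Proposition 4.1: `P (v₁ ++ v₂) = 3^(m v₂) * P v₁ + 2^(n₁) * P v₂`. -/
theorem stmt_7 (n₁ n₂ : ℕ) (v₁ v₂ : List Bool)
    (h₁ : v₁.length = n₁) (h₂ : v₂.length = n₂) :
    Pchar (v₁ ++ v₂) = 3 ^ mOnes v₂ * Pchar v₁ + 2 ^ n₁ * Pchar v₂ := by
  subst h₁ h₂
  induction v₁ with
  | nil => simp [Pchar]
  | cons e rest ih =>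
    cases e <;> simp [Pchar, ih, mOnes_append, pow_add, pow_succ] <;> ring
end

section
/- Let u be a binary vector of length n ≥ 1 and, for an integer k ≥ 1, let v_k be the concatenation of k copies of u (a binary vector of length k·n, with m(v_k) = k·m(u)). Then, as an identity of integers, (3^{m(u)} − 2^{n}) · P(v_k) = (3^{k·m(u)} − 2^{k·n}) · P(u). (Paper's Corollary 4.2.) -/
lemma Pchar_append (a b : List Bool) :
    Pchar (a ++ b) = 3 ^ mOnes b * Pchar a + 2 ^ a.length * Pchar b := by
  induction a with
  | nil => simp [Pchar]
  | cons e rest ih =>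
      cases e <;> simp [Pchar, ih, mOnes_append, pow_add] <;> ring

lemma mOnes_flatten (u : List Bool) (k : ℕ) :
    mOnes ((List.replicate k u).flatten) = k * mOnes u := by
  induction k with
  | zero => simp [mOnes]
  | succ k ih =>
      simp [List.replicate_succ, mOnes_append, ih, Nat.succ_mul, Nat.add_comm]

/-- Paper's Corollary 4.2: for the concatenation v_k of k copies of u,
`(3^(m u) - 2^(n u)) * P v_k = (3^(k * m u) - 2^(k * n u)) * P u` in ℤ. -/
theorem stmt_8 (u : List Bool) (hu : 1 ≤ u.length) (k : ℕ) (hk : 1 ≤ k) :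
    ((3 : ℤ) ^ mOnes u - 2 ^ u.length) *
        (Pchar ((List.replicate k u).flatten) : ℤ) =
      ((3 : ℤ) ^ (k * mOnes u) - 2 ^ (k * u.length)) * (Pchar u : ℤ) := by
  clear hu hk
  induction k with
  | zero => simp [Pchar]
  | succ k ih =>
      have hm := mOnes_flatten u k
      have h : ((List.replicate (k+1) u).flatten : List Bool)
          = u ++ (List.replicate k u).flatten := by
        simp [List.replicate_succ]
      rw [h, Pchar_append, hm]
      push_cast
      rw [show (k+1) * mOnes u = k * mOnes u + mOnes u by ring,
          show (k+1) * u.length = k * u.length + u.length by ring]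
      rw [pow_add, pow_add]
      linear_combination (2:ℤ) ^ u.length * ih
end

section
/- Let V = (e_1, e_2, …) be an infinite binary sequence and, for j ≥ 1, let N_{0,j}(V) be the smallest positive integer whose parity vector of length j equals (e_1, …, e_j). Then there exists a positive integer N such that for every j ≥ 1 the parity vector of length j of N equals (e_1, …, e_j) (i.e., V is realizable as the parity vector of an infinite Collatz sequence) if and only if the real sequence N_{0,j}(V)/2^j tends to 0 as j → ∞. (Paper's Theorem 6.2, equivalently Proposition 2.1.) -/
lemma parityVec_congr : ∀ j A B, parityVec A j = parityVec B j → A ≡ B [MOD 2 ^ j] := by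
  intro j
  induction j with
  | zero => intro A B _; simp [Nat.ModEq, Nat.mod_one]
  | succ j ih =>
    intro A B h
    rw [parityVec_succ, parityVec_succ] at h
    have h1 : (A % 2 = 1) ↔ (B % 2 = 1) := by
      have := List.head_eq_of_cons_eq h
      simpa [decide_eq_decide] using this
    have h2 : collatzT A ≡ collatzT B [MOD 2 ^ j] :=
      ih _ _ (List.tail_eq_of_cons_eq h)
    have h3 := Nat.ModEq.mul_left' 2 h2
    rw [← pow_succ'] at h3
    rcases Nat.mod_two_eq_zero_or_one A with hA | hA
    · have hB : B % 2 = 0 := by omega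
      have eA : 2 * collatzT A = A := by simp [collatzT, hA]; omega
      have eB : 2 * collatzT B = B := by simp [collatzT, hB]; omega
      rwa [eA, eB] at h3
    · have hB : B % 2 = 1 := by omega
      have eA : 2 * collatzT A = 3 * A + 1 := by
        simp [collatzT, hA]; omega
      have eB : 2 * collatzT B = 3 * B + 1 := by
        simp [collatzT, hB]; omega
      rw [eA, eB] at h3
      have h4 : 3 * A ≡ 3 * B [MOD 2 ^ (j + 1)] := Nat.ModEq.add_right_cancel' 1 h3
      have hcop : Nat.gcd (2 ^ (j + 1)) 3 = 1 :=
        Nat.Coprime.pow_left _ (by decide)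
      exact Nat.ModEq.cancel_left_of_coprime hcop h4

lemma parityVec_prefix {V : ℕ → Bool} {M j k : ℕ} (h : j ≤ k)
    (hM : parityVec M k = (List.range k).map V) :
    parityVec M j = (List.range j).map V := by
  unfold parityVec at *
  rw [List.map_inj_left] at hM ⊢
  intro x hx
  exact hM x (List.mem_range.2 (lt_of_lt_of_le (List.mem_range.1 hx) h))


/-- Paper's Theorem 6.2 (Proposition 2.1): V is realizable as the parity vector of
an infinite Collatz sequence iff `N j / 2^j → 0`, where N j is the smallest
positive integer realizing the length-j truncation of V. -/
theorem stmt_15 (V : ℕ → Bool) (N : ℕ → ℕ)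
    (hN : ∀ j, 1 ≤ j →
      IsLeast {M : ℕ | 0 < M ∧ parityVec M j = (List.range j).map V} (N j)) :
    (∃ N₀ : ℕ, 0 < N₀ ∧ ∀ j, 1 ≤ j → parityVec N₀ j = (List.range j).map V) ↔
      Filter.Tendsto (fun j => (N j : ℝ) / 2 ^ j) Filter.atTop (nhds 0) := by
  constructor
  · rintro ⟨N₀, hpos, hV⟩
    have hle : ∀ j, 1 ≤ j → (N j : ℝ) ≤ (N₀ : ℝ) := fun j hj =>
      Nat.cast_le.2 ((hN j hj).2 ⟨hpos, hV j hj⟩)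
    have hg : Filter.Tendsto (fun j : ℕ => (N₀ : ℝ) * (1 / 2) ^ j)
        Filter.atTop (nhds 0) := by
      simpa using (tendsto_pow_atTop_nhds_zero_of_lt_one
        (by norm_num : (0:ℝ) ≤ 1/2) (by norm_num)).const_mul (N₀ : ℝ)
    refine squeeze_zero' ?_ ?_ hg
    · filter_upwards with j; positivity
    · filter_upwards [Filter.eventually_ge_atTop 1] with j hj
      rw [div_le_iff₀ (by positivity)]
      calc (N j : ℝ) ≤ N₀ := hle j hj
        _ = N₀ * (1/2)^j * 2^j := by
            rw [mul_assoc]; norm_num [← mul_pow]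
  · intro h
    have hev := h.eventually_lt_const (by norm_num : (0:ℝ) < 1/2)
    obtain ⟨J, hJ⟩ := Filter.eventually_atTop.1 hev
    set K := max J 1 with hK
    have hK1 : 1 ≤ K := le_max_right _ _
    have hbnd : ∀ j, K ≤ j → N j < 2 ^ (j - 1) := by
      intro j hj
      have hj1 : 1 ≤ j := le_trans hK1 hj
      have := hJ j (le_trans (le_max_left _ _) hj)
      have h2 : (N j : ℝ) < 2 ^ j / 2 := by
        rw [div_lt_iff₀ (by positivity)] at this
        linarith
      have h3 : (2:ℝ) ^ j = 2 ^ (j - 1) * 2 := by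
        rw [← pow_succ]; congr 1; omega
      rw [h3, mul_div_assoc] at h2
      norm_num at h2
      exact_mod_cast h2
    have hconst : ∀ j, K ≤ j → N j = N K := by
      intro j hj
      induction j, hj using Nat.le_induction with
      | base => rfl
      | succ j hj ihj =>
        have hj1 : 1 ≤ j := le_trans hK1 hj
        have hmem := (hN (j+1) (by omega)).1
        have hmemj : N (j+1) ∈ {M : ℕ | 0 < M ∧ parityVec M j = (List.range j).map V} :=
          ⟨hmem.1, parityVec_prefix (Nat.le_succ j) hmem.2⟩
        have hle : N j ≤ N (j+1) := (hN j hj1).2 hmemj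
        have hcong : N (j+1) ≡ N j [MOD 2 ^ j] :=
          parityVec_congr j _ _ (hmemj.2.trans ((hN j hj1).1.2).symm)
        have hb : N (j+1) < 2 ^ j := by
          have := hbnd (j+1) (by omega)
          simpa using this
        have : N (j+1) = N j := by
          have h1 : N (j+1) % 2 ^ j = N (j+1) := Nat.mod_eq_of_lt hb
          have h2 : N j % 2 ^ j = N j := Nat.mod_eq_of_lt (lt_of_le_of_lt hle hb)
          unfold Nat.ModEq at hcong
          omega
        rw [this, ihj]
    refine ⟨N K, (hN K hK1).1.1, fun j hj => ?_⟩
    rcases le_total j K with hjK | hjK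
    · exact parityVec_prefix hjK (hN K hK1).1.2
    · rw [← hconst j hjK] at *
      exact ((hN j hj).1).2
end

section
/- Let V = (e_1, e_2, …) be an infinite binary sequence containing infinitely many entries equal to 1. For j ≥ 1 let m_j(V) and P_j(V) denote m(R_j(V)) and P(R_j(V)) for the truncation R_j(V) = (e_1, …, e_j), and write P_j(V) = 3^{m_j(V)}·α_j + β_j with 0 ≤ β_j < 3^{m_j(V)} (so α_j = ⌊P_j(V)/3^{m_j(V)}⌋). Then the real sequence α_j / 2^j tends to 0 as j → ∞. (Paper's Corollary 5.8.) -/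
lemma Pchar_lt (v : List Bool) : Pchar v < 3 ^ mOnes v * 2 ^ (v.length - mOnes v) := by
  induction v with
  | nil => simp [Pchar, mOnes]
  | cons e rest ih =>
    have hm := mOnes_le_length rest
    have h1 : 1 ≤ 2 ^ (rest.length - mOnes rest) := Nat.one_le_two_pow
    cases e with
    | true =>
      have hmo : mOnes (true :: rest) = mOnes rest + 1 := by simp [mOnes, List.count_cons]
      rw [show Pchar (true :: rest) = 3 ^ mOnes rest + 2 * Pchar rest from by simp [Pchar],
        hmo, List.length_cons, Nat.succ_sub_succ, pow_succ]
      nlinarith [ih]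
    | false =>
      have hmo : mOnes (false :: rest) = mOnes rest := by simp [mOnes, List.count_cons]
      rw [show Pchar (false :: rest) = 2 * Pchar rest from by simp [Pchar],
        hmo, List.length_cons,
        show rest.length + 1 - mOnes rest = (rest.length - mOnes rest) + 1 from by omega,
        pow_succ]
      nlinarith [ih]


/-- Paper's Corollary 5.8: with `α_j = ⌊P_j(V) / 3^(m_j(V))⌋` (so that
`P_j(V) = 3^(m_j(V)) * α_j + β_j` with `0 ≤ β_j < 3^(m_j(V))`), for an infinite
binary sequence with infinitely many ones one has `α_j / 2^j → 0`. -/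
theorem stmt_18 (V : ℕ → Bool) (hinf : {i : ℕ | V i = true}.Infinite) :
    Filter.Tendsto
      (fun j => ((Pchar ((List.range j).map V) /
        3 ^ mOnes ((List.range j).map V) : ℕ) : ℝ) / 2 ^ j)
      Filter.atTop (nhds 0) := by
  set f : ℕ → ℕ := fun j => mOnes ((List.range j).map V) with hf
  have hsucc : ∀ j, f (j + 1) = f j + (if V j = true then 1 else 0) := by
    intro j
    simp only [hf, mOnes, List.range_succ, List.map_append, List.count_append]
    simp [List.count_cons]
  have hmono : Monotone f := monotone_nat_of_le_succ (fun j => by rw [hsucc]; omega)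
  have hub : ∀ N, ∃ j, N ≤ f j := by
    intro N
    induction N with
    | zero => exact ⟨0, Nat.zero_le _⟩
    | succ N ihN =>
      obtain ⟨j, hj⟩ := ihN
      obtain ⟨i, hi, hji⟩ : ∃ i ∈ {i : ℕ | V i = true}, j < i := by
        by_contra hcon
        push_neg at hcon
        exact hinf (Set.Finite.subset (Set.finite_Iic j) (fun x hx => hcon x hx))
      refine ⟨i + 1, ?_⟩
      have : f j ≤ f i := hmono hji.le
      simp only [Set.mem_setOf_eq] at hi
      rw [hsucc, if_pos hi]
      omega
  have hfT : Filter.Tendsto f Filter.atTop Filter.atTop :=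
    Filter.tendsto_atTop_atTop_of_monotone hmono hub
  have hb : Filter.Tendsto (fun j => ((1 : ℝ) / 2) ^ f j) Filter.atTop (nhds 0) :=
    (tendsto_pow_atTop_nhds_zero_of_lt_one (by norm_num) (by norm_num)).comp hfT
  refine squeeze_zero (fun j => by positivity) (fun j => ?_) hb
  have hmle : f j ≤ j := by
    simpa [hf] using mOnes_le_length ((List.range j).map V)
  have hlen : ((List.range j).map V).length = j := by simp
  have hnat : Pchar ((List.range j).map V) / 3 ^ f j < 2 ^ (j - f j) := by
    rw [Nat.div_lt_iff_lt_mul (Nat.pow_pos (by norm_num))]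
    have := Pchar_lt ((List.range j).map V)
    rw [hlen] at this
    rw [mul_comm]
    exact this
  have hcast : ((Pchar ((List.range j).map V) / 3 ^ f j : ℕ) : ℝ) ≤ 2 ^ (j - f j) := by
    calc ((Pchar ((List.range j).map V) / 3 ^ f j : ℕ) : ℝ)
        ≤ ((2 ^ (j - f j) : ℕ) : ℝ) := Nat.cast_le.2 hnat.le
      _ = 2 ^ (j - f j) := by push_cast; ring
  have h2j : (2 : ℝ) ^ (j - f j) * 2 ^ f j = 2 ^ j := by
    rw [← pow_add, Nat.sub_add_cancel hmle]
  rw [div_le_iff₀ (by positivity)]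
  calc ((Pchar ((List.range j).map V) / 3 ^ f j : ℕ) : ℝ)
      ≤ 2 ^ (j - f j) := hcast
    _ = (1 / 2) ^ f j * 2 ^ j := by
        rw [← h2j, div_pow, one_pow]
        field_simp
end
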